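/- Let u and v be two distinct boundary paths of a convex point set P with n ≥ 5 points, missing hull edges e_u and e_v respectively. Then e_u and e_v share an endpoint if and only if the edge (u,v) of the path graph G(P) is not contained in any maximal clique of size 4. -/

import Mathlib

namespace PG

/-- The `k`-th vertex (mod `n`) of the convex polygon. -/
def pt (n : ℕ) (hn : 0 < n) (k : ℕ) : Fin n := ⟨k % n, Nat.mod_lt _ hn⟩

/-- `e` is a boundary (convex hull) edge of the convex `n`-gon. -/
def IsHullEdge {n : ℕ} (e : Sym2 (Fin n)) : Prop :=
  ∃ a b : Fin n, e = s(a, b) ∧ ((a.val + 1) % n = b.val ∨ (b.val + 1) % n = a.val)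

instance {n : ℕ} : DecidablePred (IsHullEdge (n := n)) := fun _ => by
  unfold IsHullEdge; infer_instance

/-- Two chords of the convex `n`-gon cross (intersect in interior points):
their endpoint pairs are all distinct and separate each other in the cyclic order. -/
def Crosses {n : ℕ} (e f : Sym2 (Fin n)) : Prop :=
  ∃ a b c d : Fin n, e = s(a, b) ∧ f = s(c, d) ∧
    a ≠ b ∧ c ≠ d ∧ a ≠ c ∧ a ≠ d ∧ b ≠ c ∧ b ≠ d ∧
    (((c.val + n - a.val) % n < (b.val + n - a.val) % n) ↔
      ¬((d.val + n - a.val) % n < (b.val + n - a.val) % n))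

instance {n : ℕ} (e f : Sym2 (Fin n)) : Decidable (Crosses e f) := by
  unfold Crosses; infer_instance

/-- The edge set of the spanning path visiting the points in the order given
by the permutation `p`. -/
def pathEdges {n : ℕ} (p : Equiv.Perm (Fin n)) : Finset (Sym2 (Fin n)) :=
  Finset.univ.filter (fun e => ∃ i j : Fin n, e = s(p i, p j) ∧ j.val = i.val + 1)

/-- `E` is the edge set of a non-crossing (plane) spanning path. -/
def IsNCPath {n : ℕ} (E : Finset (Sym2 (Fin n))) : Prop :=
  (∃ p : Equiv.Perm (Fin n), E = pathEdges p) ∧ ∀ e ∈ E, ∀ f ∈ E, ¬ Crosses e f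

instance {n : ℕ} : DecidablePred (IsNCPath (n := n)) := fun _ => by
  unfold IsNCPath pathEdges; infer_instance

/-- Vertices of the path graph `G(P)`: non-crossing spanning paths. -/
def PVert (n : ℕ) := {E : Finset (Sym2 (Fin n)) // IsNCPath E}

instance {n : ℕ} : Fintype (PVert n) := Subtype.fintype _
instance {n : ℕ} : DecidableEq (PVert n) := Subtype.instDecidableEq

/-- The path graph `G(P)`: two plane spanning paths are adjacent iff their
edge sets differ in exactly two edges. -/
def pathGraph (n : ℕ) : SimpleGraph (PVert n) where
  Adj u v := u ≠ v ∧ (u.1 \ v.1 ∪ v.1 \ u.1).card = 2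
  symm := by constructor; rintro u v ⟨h1, h2⟩; exact ⟨h1.symm, by rwa [Finset.union_comm]⟩
  loopless := by constructor; rintro u ⟨h, _⟩; exact h rfl

instance {n : ℕ} : DecidableRel (pathGraph n).Adj := fun u v => by
  unfold pathGraph; infer_instance

/-- `v` is a boundary path: all its edges are hull edges. -/
def IsBoundary {n : ℕ} (v : PVert n) : Prop := ∀ e ∈ v.1, IsHullEdge e

/-- Number of diagonals (the level) of a path. -/
def diagCount {n : ℕ} (v : PVert n) : ℕ :=
  (v.1.filter (fun e => ¬ IsHullEdge e)).card

/-- Degree of a point in an edge set. -/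
def degIn {n : ℕ} (E : Finset (Sym2 (Fin n))) (x : Fin n) : ℕ :=
  (E.filter (fun e => x ∈ e)).card

/-- A maximal clique in a graph. -/
def IsMaxClique {V : Type*} (G : SimpleGraph V) (s : Set V) : Prop :=
  G.IsClique s ∧ ∀ t : Set V, G.IsClique t → s ⊆ t → t ⊆ s

open Fin.CommRing

section helpers
variable {n : ℕ} [NeZero n]

lemma vsub' (x y : Fin n) :
    (x - y).val = if y.val ≤ x.val then x.val - y.val else x.val + n - y.val := by
  rw [Fin.sub_def]
  split_ifs with h
  · show (n - y.val + x.val) % n = _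
    have h1 : n - y.val + x.val = n + (x.val - y.val) := by omega
    rw [h1, Nat.add_mod_left, Nat.mod_eq_of_lt (by omega)]
  · show (n - y.val + x.val) % n = _
    have hy := y.isLt
    rw [Nat.mod_eq_of_lt (by omega)]
    omega

lemma vadd' (x y : Fin n) :
    (x + y).val = if x.val + y.val < n then x.val + y.val else x.val + y.val - n := by
  rw [Fin.val_add]
  split_ifs with h
  · exact Nat.mod_eq_of_lt h
  · have hx := x.isLt; have hy := y.isLt
    rw [Nat.mod_eq_sub_mod (by omega), Nat.mod_eq_of_lt (by omega)]

lemma cyc (x y : Fin n) : (x.val + n - y.val) % n = (x - y).val := by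
  rw [Fin.sub_def]
  show _ = (n - y.val + x.val) % n
  congr 1
  have := y.isLt
  omega

lemma vone (hn : 2 ≤ n) : (1 : Fin n).val = 1 := by
  rw [Fin.val_one', Nat.mod_eq_of_lt (by omega)]

lemma veq {x y : Fin n} : x = y ↔ x.val = y.val := Fin.ext_iff

lemma vaddone (hn : 2 ≤ n) (x : Fin n) :
    (x + 1).val = if x.val + 1 < n then x.val + 1 else 0 := by
  rw [vadd', vone hn]
  have := x.isLt
  split_ifs <;> omega

lemma vsubone (hn : 2 ≤ n) (x : Fin n) :
    (x - 1).val = if 1 ≤ x.val then x.val - 1 else n - 1 := by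
  rw [vsub', vone hn]
  have := x.isLt
  split_ifs <;> omega

lemma modsucc (x : Fin n) : (x.val + 1) % n = if x.val + 1 < n then x.val + 1 else 0 := by
  have := x.isLt
  split_ifs with h
  · exact Nat.mod_eq_of_lt h
  · have : x.val + 1 = n := by omega
    rw [this, Nat.mod_self]

/-- hull edge characterization -/
lemma hull_iff (hn : 2 ≤ n) {e : Sym2 (Fin n)} :
    IsHullEdge e ↔ ∃ x : Fin n, e = s(x, x + 1) := by
  constructor
  · rintro ⟨a, b, rfl, h | h⟩
    · refine ⟨a, ?_⟩
      have : b = a + 1 := by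
        rw [veq, vaddone hn, ← h, modsucc]
      rw [this]
    · refine ⟨b, ?_⟩
      have : a = b + 1 := by
        rw [veq, vaddone hn, ← h, modsucc]
      rw [this, Sym2.eq_swap]
  · rintro ⟨x, rfl⟩
    refine ⟨x, x + 1, rfl, Or.inl ?_⟩
    rw [vaddone hn, modsucc]

lemma succ_inj (hn : 3 ≤ n) {x y : Fin n} (h : s(x, x+1) = s(y, y+1)) : x = y := by
  rw [Sym2.eq_iff] at h
  rcases h with ⟨h1, _⟩ | ⟨h1, h2⟩
  · exact h1
  · exfalso
    have hx : x = x + 1 + 1 := by conv_lhs => rw [h1, ← h2]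
    rw [veq, vaddone (by omega), vaddone (by omega)] at hx
    have := x.isLt
    split_ifs at hx <;> omega

/-- the hull edge finset -/
def hullF (n : ℕ) : Finset (Sym2 (Fin n)) := Finset.univ.filter IsHullEdge

lemma mem_hullF {e : Sym2 (Fin n)} : e ∈ hullF n ↔ IsHullEdge e := by
  simp [hullF]

lemma hullF_eq (hn : 3 ≤ n) :
    hullF n = Finset.image (fun x : Fin n => s(x, x + 1)) Finset.univ := by
  ext e
  simp only [mem_hullF, Finset.mem_image, Finset.mem_univ, true_and]
  rw [hull_iff (by omega)]
  constructor <;> rintro ⟨x, h⟩ <;> exact ⟨x, h.symm⟩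

lemma card_hullF (hn : 3 ≤ n) : (hullF n).card = n := by
  rw [hullF_eq hn, Finset.card_image_of_injective _ (fun x y h => succ_inj hn h)]
  simp

lemma hull_mem_endpoints (hn : 3 ≤ n) {e : Sym2 (Fin n)} (he : IsHullEdge e) {x : Fin n}
    (hx : x ∈ e) : e = s(x - 1, x) ∨ e = s(x, x + 1) := by
  rw [hull_iff (by omega)] at he
  obtain ⟨y, rfl⟩ := he
  rw [Sym2.mem_iff] at hx
  rcases hx with rfl | h
  · right; rfl
  · left
    rw [Sym2.eq_iff]
    left
    exact ⟨by rw [h]; ring, h.symm⟩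


end helpers

section pe
variable {n : ℕ} [NeZero n] (p : Equiv.Perm (Fin n))

lemma mem_pathEdges {e : Sym2 (Fin n)} :
    e ∈ pathEdges p ↔ ∃ i j : Fin n, e = s(p i, p j) ∧ j.val = i.val + 1 := by
  simp [pathEdges]

/-- convenient reformulation: indices i, i+1 -/
lemma mem_pathEdges' (hn : 2 ≤ n) {e : Sym2 (Fin n)} :
    e ∈ pathEdges p ↔ ∃ i : Fin n, i.val + 1 < n ∧ e = s(p i, p (i + 1)) := by
  rw [mem_pathEdges]
  constructor
  · rintro ⟨i, j, rfl, hj⟩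
    have hij : j = i + 1 := by
      rw [veq, vaddone hn]
      have := j.isLt
      split_ifs <;> omega
    exact ⟨i, by have := j.isLt; omega, by rw [hij]⟩
  · rintro ⟨i, hi, rfl⟩
    exact ⟨i, i + 1, rfl, by rw [vaddone hn]; split_ifs <;> omega⟩

lemma pathEdges_eq_image (hn : 2 ≤ n) :
    pathEdges p = (Finset.univ.filter (fun i : Fin n => i.val + 1 < n)).image
      (fun i => s(p i, p (i + 1))) := by
  ext e
  rw [mem_pathEdges' p hn]
  simp only [Finset.mem_image, Finset.mem_filter, Finset.mem_univ, true_and]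
  constructor
  · rintro ⟨i, h1, h2⟩; exact ⟨i, h1, h2.symm⟩
  · rintro ⟨i, h1, h2⟩; exact ⟨i, h1, h2.symm⟩

lemma card_pathEdges (hn : 2 ≤ n) : (pathEdges p).card = n - 1 := by
  rw [pathEdges_eq_image p hn]
  rw [Finset.card_image_of_injOn ?inj]
  case inj =>
    intro i hi j hj h
    simp only [Finset.mem_coe, Finset.mem_filter, Finset.mem_univ, true_and] at hi hj
    simp only [Sym2.eq_iff] at h
    rcases h with ⟨h1, _⟩ | ⟨h1, h2⟩
    · exact p.injective h1
    · exfalso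
      have e1 : i = j + 1 := p.injective h1
      have e2 : (i:Fin n) + 1 = j := p.injective h2
      rw [veq, vaddone hn] at e1 e2
      split_ifs at e1 e2 <;> omega
  · have : (Finset.univ.filter (fun i : Fin n => i.val + 1 < n)) =
        Finset.univ.erase ⟨n - 1, by omega⟩ := by
      ext i
      simp only [Finset.mem_filter, Finset.mem_univ, true_and, Finset.mem_erase, and_true]
      rw [ne_eq, veq]
      have := i.isLt
      constructor <;> intro h <;> simp_all <;> omega
    rw [this, Finset.card_erase_of_mem (Finset.mem_univ _)]
    simp

lemma pathEdges_not_isDiag {e : Sym2 (Fin n)} (he : e ∈ pathEdges p) : ¬ e.IsDiag := by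
  rw [mem_pathEdges] at he
  obtain ⟨i, j, rfl, hj⟩ := he
  rw [Sym2.isDiag_iff_proj_eq]
  intro h
  have : i = j := p.injective h
  omega

lemma degIn_le_two (hn : 2 ≤ n) (x : Fin n) : degIn (pathEdges p) x ≤ 2 := by
  have hsub : (pathEdges p).filter (fun e => x ∈ e) ⊆
      {s(p (p.symm x - 1), x), s(x, p (p.symm x + 1))} := by
    intro e he
    simp only [Finset.mem_filter] at he
    obtain ⟨he, hx⟩ := he
    rw [mem_pathEdges' p hn] at he
    obtain ⟨i, hi, rfl⟩ := he
    rw [Sym2.mem_iff] at hx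
    simp only [Finset.mem_insert, Finset.mem_singleton]
    rcases hx with hx | hx
    · right
      have h1 : p.symm x = i := by rw [hx, Equiv.symm_apply_apply]
      rw [h1, hx]
    · left
      have h1 : p.symm x = i + 1 := by rw [hx, Equiv.symm_apply_apply]
      have h2 : p.symm x - 1 = i := by rw [h1]; ring
      rw [h2, hx]
  calc (degIn (pathEdges p) x) ≤ _ := Finset.card_le_card hsub
    _ ≤ 2 := Finset.card_insert_le _ _ |>.trans (by simp)

lemma degIn_ge_one (hn : 2 ≤ n) (x : Fin n) : 1 ≤ degIn (pathEdges p) x := by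
  rw [degIn]
  apply Finset.card_pos.2
  set i := p.symm x with hi
  have hx : p i = x := by simp [hi]
  by_cases h : i.val + 1 < n
  · exact ⟨s(p i, p (i + 1)), by
      simp only [Finset.mem_filter]
      refine ⟨(mem_pathEdges' p hn).2 ⟨i, h, rfl⟩, ?_⟩
      rw [hx]; simp⟩
  · refine ⟨s(p (i - 1), p i), ?_⟩
    simp only [Finset.mem_filter]
    have hiv : i.val = n - 1 := by have := i.isLt; omega
    have h1 : (i - 1).val + 1 < n := by
      rw [vsubone hn]; split_ifs <;> omega
    have h2 : (i - 1) + 1 = i := by ring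
    refine ⟨(mem_pathEdges' p hn).2 ⟨i - 1, h1, by rw [h2]⟩, ?_⟩
    rw [hx]; simp

lemma degIn_interior (hn : 2 ≤ n) {i : Fin n} (h1 : 0 < i.val) (h2 : i.val + 1 < n) :
    2 ≤ degIn (pathEdges p) (p i) := by
  rw [degIn]
  have hsub : {s(p (i-1), p i), s(p i, p (i+1))} ⊆
      (pathEdges p).filter (fun e => p i ∈ e) := by
    intro e he
    simp only [Finset.mem_insert, Finset.mem_singleton] at he
    simp only [Finset.mem_filter]
    rcases he with rfl | rfl
    · have hv : (i - 1).val + 1 < n := by rw [vsubone hn]; split_ifs <;> omega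
      have h2' : (i - 1) + 1 = i := by ring
      exact ⟨(mem_pathEdges' p hn).2 ⟨i - 1, hv, by rw [h2']⟩, by simp⟩
    · exact ⟨(mem_pathEdges' p hn).2 ⟨i, h2, rfl⟩, by simp⟩
  have hcard : ({s(p (i-1), p i), s(p i, p (i+1))} : Finset (Sym2 (Fin n))).card = 2 := by
    rw [Finset.card_insert_of_notMem, Finset.card_singleton]
    simp only [Finset.mem_singleton, Sym2.eq_iff]
    rintro (⟨ha, _⟩ | ⟨hb, _⟩)
    · have : i - 1 = i := p.injective ha
      rw [veq, vsubone hn] at this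
      split_ifs at this <;> omega
    · have : i - 1 = i + 1 := p.injective hb
      rw [veq, vsubone hn, vaddone hn] at this
      split_ifs at this <;> omega
  calc 2 = _ := hcard.symm
    _ ≤ _ := Finset.card_le_card hsub

/-- In a spanning path, the number of edges inside a vertex set S is < |S| (acyclicity). -/
lemma edges_within_lt (hn : 2 ≤ n) (S : Finset (Fin n)) :
    ((pathEdges p).filter (fun e => ∀ y ∈ e, y ∈ S)).card ≤ S.card - 1 := by
  by_cases hne : ((pathEdges p).filter (fun e => ∀ y ∈ e, y ∈ S)).Nonempty
  case neg => simp [Finset.not_nonempty_iff_eq_empty.1 hne]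
  -- the set of positions i with edge (i,i+1) inside S
  set T := Finset.univ.filter (fun i : Fin n => i.val + 1 < n ∧ p i ∈ S ∧ p (i + 1) ∈ S) with hT
  have hsub : ((pathEdges p).filter (fun e => ∀ y ∈ e, y ∈ S)) ⊆
      T.image (fun i => s(p i, p (i + 1))) := by
    intro e he
    simp only [Finset.mem_filter] at he
    obtain ⟨he, hS⟩ := he
    rw [mem_pathEdges' p hn] at he
    obtain ⟨i, hi, rfl⟩ := he
    refine Finset.mem_image.2 ⟨i, ?_, rfl⟩
    rw [hT]
    simp only [Finset.mem_filter, Finset.mem_univ, true_and]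
    exact ⟨hi, hS _ (by simp), hS _ (by simp)⟩
  -- W = positions with vertex in S
  set W := Finset.univ.filter (fun i : Fin n => p i ∈ S) with hW
  have hWne : W.Nonempty := by
    obtain ⟨e, he⟩ := hne
    simp only [Finset.mem_filter] at he
    obtain ⟨he, hS⟩ := he
    rw [mem_pathEdges' p hn] at he
    obtain ⟨i, hi, rfl⟩ := he
    exact ⟨i, by simp [hW, hS _ (by simp : p i ∈ s(p i, p (i+1)))]⟩
  obtain ⟨i0, hi0W, hi0min⟩ := W.exists_min_image (fun i => i.val) hWne
  have hmap : ∀ i ∈ T, p (i + 1) ∈ S.erase (p i0) := by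
    intro i hiT
    simp only [hT, Finset.mem_filter, Finset.mem_univ, true_and] at hiT
    obtain ⟨hi, hpi, hpi1⟩ := hiT
    refine Finset.mem_erase.2 ⟨?_, hpi1⟩
    intro hcontra
    have he : i + 1 = i0 := p.injective hcontra
    have hiW : i ∈ W := by simp [hW, hpi]
    have hmin := hi0min i hiW
    have hv : (i + 1).val = i.val + 1 := by rw [vaddone hn]; split_ifs <;> omega
    have := congrArg Fin.val he
    omega
  have hinj : Set.InjOn (fun i => p (i + 1)) T := by
    intro i hi j hj h
    have : (i:Fin n) + 1 = j + 1 := p.injective h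
    have := congrArg (fun t => t - 1) this
    simpa using this
  have hTcard : T.card ≤ (S.erase (p i0)).card := Finset.card_le_card_of_injOn _ hmap hinj
  calc ((pathEdges p).filter (fun e => ∀ y ∈ e, y ∈ S)).card
      ≤ (T.image (fun i => s(p i, p (i + 1)))).card := Finset.card_le_card hsub
    _ ≤ T.card := Finset.card_image_le
    _ ≤ (S.erase (p i0)).card := hTcard
    _ ≤ S.card - 1 := by
        rw [Finset.card_erase_of_mem]
        · simp only [hW, Finset.mem_filter] at hi0W; exact hi0W.2

end pe

section crossing
variable {n : ℕ} [NeZero n]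

lemma not_crosses_self (e : Sym2 (Fin n)) : ¬ Crosses e e := by
  rintro ⟨a, b, c, d, h1, h2, hab, hcd, hac, had, hbc, hbd, _⟩
  rw [h1, Sym2.eq_iff] at h2
  rcases h2 with ⟨h, _⟩ | ⟨h, _⟩
  · exact hac h
  · exact had h

lemma sub_val_eq_zero {x y : Fin n} : (x - y).val = 0 ↔ x = y := by
  rw [vsub']
  have hx := x.isLt; have hy := y.isLt
  constructor
  · intro h
    rw [veq]
    split_ifs at h <;> omega
  · rintro rfl
    simp

lemma vneg_one (hn : 2 ≤ n) : (-1 : Fin n).val = n - 1 := by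
  rw [Fin.neg_def]
  show (n - (1 : Fin n).val) % n = n - 1
  rw [vone hn, Nat.mod_eq_of_lt (by omega)]

lemma sub_val_eq_last (hn : 2 ≤ n) {x y : Fin n} : (x - y).val = n - 1 ↔ x = y - 1 := by
  constructor
  · intro h
    have e1 : x - y = -1 := veq.2 (by rw [h, vneg_one hn])
    linear_combination e1
  · rintro rfl
    have e1 : y - 1 - y = -1 := by ring
    rw [e1, vneg_one hn]

lemma not_crosses_hull_left (hn : 3 ≤ n) {e f : Sym2 (Fin n)} (he : IsHullEdge e) :
    ¬ Crosses e f := by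
  rw [hull_iff (by omega)] at he
  obtain ⟨x, rfl⟩ := he
  rintro ⟨a, b, c, d, h1, h2, hab, hcd, hac, had, hbc, hbd, hmain⟩
  rw [cyc, cyc, cyc] at hmain
  rw [Sym2.eq_iff] at h1
  rcases h1 with ⟨ha, hb⟩ | ⟨ha, hb⟩
  · -- x = a, x + 1 = b
    have hba : b - a = 1 := by linear_combination ha - hb
    have hba' : (b - a).val = 1 := by rw [hba, vone (by omega)]
    rw [hba'] at hmain
    have hc : ¬ (c - a).val < 1 := by
      intro h
      exact hac (sub_val_eq_zero.1 (by omega)).symm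
    have hd : ¬ (d - a).val < 1 := by
      intro h
      exact had (sub_val_eq_zero.1 (by omega)).symm
    tauto
  · -- x = b, x + 1 = a
    have hba : b - a = -1 := by linear_combination hb - ha
    have hba' : (b - a).val = n - 1 := by rw [hba, vneg_one (by omega)]
    rw [hba'] at hmain
    have hc : (c - a).val < n - 1 := by
      have h1 : (c - a).val < n := (c - a).isLt
      have h2 : (c - a).val ≠ n - 1 := by
        intro h
        have e1 : c - a = -1 := veq.2 (by rw [h, vneg_one (by omega)])
        exact hbc (by linear_combination hba - e1)
      omega
    have hd : (d - a).val < n - 1 := by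
      have h1 : (d - a).val < n := (d - a).isLt
      have h2 : (d - a).val ≠ n - 1 := by
        intro h
        have e1 : d - a = -1 := veq.2 (by rw [h, vneg_one (by omega)])
        exact hbd (by linear_combination hba - e1)
      omega
    tauto

lemma not_crosses_hull_right (hn : 3 ≤ n) {e f : Sym2 (Fin n)} (hf : IsHullEdge f) :
    ¬ Crosses e f := by
  rw [hull_iff (by omega)] at hf
  obtain ⟨x, rfl⟩ := hf
  rintro ⟨a, b, c, d, h1, h2, hab, hcd, hac, had, hbc, hbd, hmain⟩
  rw [cyc, cyc, cyc] at hmain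
  have key : ∀ c d : Fin n, d = c + 1 → c ≠ a → c ≠ b → d ≠ a → d ≠ b →
      (((c - a).val < (b - a).val) ↔ ¬ ((d - a).val < (b - a).val)) → False := by
    intro c d hdc hca hcb hda hdb hm
    have h1 : (c - a).val ≠ 0 := fun h => hca (sub_val_eq_zero.1 h)
    have h2 : (c - a).val ≠ n - 1 := by
      intro h
      have e1 : c - a = -1 := veq.2 (by rw [h, vneg_one (by omega)])
      apply hda
      rw [hdc]
      linear_combination e1
    have h3 : (d - a).val = (c - a).val + 1 := by
      have h' : d - a = (c - a) + 1 := by rw [hdc]; ring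
      rw [h', vaddone (by omega)]
      have := (c - a).isLt
      split_ifs <;> omega
    have h4 : (c - a).val ≠ (b - a).val := by
      intro h
      apply hcb
      have e1 : c - a = b - a := veq.2 h
      linear_combination e1
    have h5 : (d - a).val ≠ (b - a).val := by
      intro h
      apply hdb
      have e1 : d - a = b - a := veq.2 h
      linear_combination e1
    rw [h3] at hm h5
    rcases hm with ⟨hm1, hm2⟩
    by_cases hlt : (c - a).val < (b - a).val
    · have := hm1 hlt
      omega
    · have hB : (c - a).val + 1 < (b - a).val := by
        by_contra hB
        exact hlt (hm2 hB)
      omega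
  rw [Sym2.eq_iff] at h2
  rcases h2 with ⟨hc, hd⟩ | ⟨hc, hd⟩
  · exact key c d (by linear_combination hc - hd) hac.symm hbc.symm had.symm hbd.symm hmain
  · exact key d c (by linear_combination hc - hd) had.symm hbd.symm hac.symm hbc.symm (by tauto)

/-- a set of edges that is a pathEdges and consists of hull edges plus possibly
one distinguished edge is a non-crossing path -/
lemma isNCPath_of_hull_or (hn : 3 ≤ n) {E : Finset (Sym2 (Fin n))} (d : Sym2 (Fin n))
    (hp : ∃ p : Equiv.Perm (Fin n), E = pathEdges p)
    (hall : ∀ e ∈ E, IsHullEdge e ∨ e = d) : IsNCPath E := by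
  refine ⟨hp, ?_⟩
  intro e he f hf
  rcases hall e he with h | rfl
  · exact not_crosses_hull_left hn h
  · rcases hall f hf with h | rfl
    · exact not_crosses_hull_right hn h
    · exact not_crosses_self _

end crossing

section constructions
variable {n : ℕ} [NeZero n]

lemma vsucc (hn : 2 ≤ n) {i : Fin n} (h : i.val + 1 < n) : (i + 1).val = i.val + 1 := by
  rw [vaddone hn]
  simp [h]

lemma vpred (hn : 2 ≤ n) {i : Fin n} (h : 1 ≤ i.val) : (i - 1).val = i.val - 1 := by
  rw [vsubone hn]
  simp [h]

lemma val_last_iff (hn : 2 ≤ n) {x : Fin n} : x.val = n - 1 ↔ x = -1 := by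
  rw [veq, vneg_one hn]

lemma vneg {y : Fin n} (hy : y ≠ 0) : (-y).val = n - y.val := by
  rw [Fin.neg_def]
  show (n - y.val) % n = n - y.val
  have h1 : y.val ≠ 0 := fun h => hy (by rw [veq, h]; rfl)
  have := y.isLt
  exact Nat.mod_eq_of_lt (by omega)

/-- the boundary path missing hull edge s(c, c+1) -/
lemma bpath_edges (hn : 3 ≤ n) (c : Fin n) :
    pathEdges (Equiv.addLeft (c + 1) : Equiv.Perm (Fin n)) = hullF n \ {s(c, c + 1)} := by
  ext e
  rw [mem_pathEdges' _ (by omega), Finset.mem_sdiff, mem_hullF, Finset.mem_singleton]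
  simp only [Equiv.coe_addLeft]
  constructor
  · rintro ⟨i, hi, rfl⟩
    have hx : (c + 1 + (i + 1)) = (c + 1 + i) + 1 := by ring
    rw [hx]
    refine ⟨(hull_iff (by omega)).2 ⟨_, rfl⟩, ?_⟩
    intro hcontra
    have : c + 1 + i = c := succ_inj hn hcontra
    have hi1 : i = -1 := by linear_combination this
    rw [veq, vneg_one (by omega)] at hi1
    omega
  · rintro ⟨he, hne⟩
    rw [hull_iff (by omega)] at he
    obtain ⟨x, rfl⟩ := he
    have hxc : x ≠ c := fun h => hne (by rw [h])
    refine ⟨x - (c + 1), ?_, ?_⟩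
    · have h1 : (x - (c + 1)).val ≠ n - 1 := by
        intro h
        rw [val_last_iff (by omega)] at h
        exact hxc (by linear_combination h)
      have := (x - (c + 1)).isLt
      omega
    · have e1 : c + 1 + (x - (c + 1)) = x := by ring
      have e2 : c + 1 + (x - (c + 1) + 1) = x + 1 := by ring
      rw [e1, e2]

lemma bpath_ncpath (hn : 3 ≤ n) (c : Fin n) : IsNCPath (hullF n \ {s(c, c + 1)}) := by
  refine isNCPath_of_hull_or hn s(c, c+1) ⟨_, (bpath_edges hn c).symm⟩ ?_
  intro e he
  rw [Finset.mem_sdiff, mem_hullF] at he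
  exact Or.inl he.1

/-- first one-diagonal path function: b, b-1, ..., a+1, b+1, b+2, ..., a  -/
def pwFun1 (a b : Fin n) : Fin n → Fin n :=
  fun i => if i.val < (b - a).val then b - i else b + 1 + (i - (b - a))

lemma pwFun1_inj (hn : 2 ≤ n) (a b : Fin n) : Function.Injective (pwFun1 a b) := by
  intro i j h
  unfold pwFun1 at h
  have key : ∀ i j : Fin n, i.val < (b-a).val → ¬ j.val < (b-a).val →
      b - i = b + 1 + (j - (b - a)) → False := by
    intro i j hi hj heq
    have hm : i + j + 1 = b - a := by linear_combination -heq
    rw [veq, vadd', vadd', vone hn] at hm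
    have := i.isLt; have := j.isLt; have := (b-a).isLt
    split_ifs at hm <;> omega
  split_ifs at h with h1 h2 h2
  · linear_combination -h
  · exact absurd h (fun h => key i j h1 h2 h)
  · exact absurd h (fun h => key j i h2 h1 h.symm)
  · linear_combination h

noncomputable def pwEquiv1 (hn : 2 ≤ n) (a b : Fin n) : Equiv.Perm (Fin n) :=
  Equiv.ofBijective _ (Finite.injective_iff_bijective.1 (pwFun1_inj hn a b))

/-- second one-diagonal path function: a+1, a+2, ..., b, a, a-1, ..., b+1  -/
def pwFun2 (a b : Fin n) : Fin n → Fin n :=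
  fun i => if i.val < (b - a).val then a + 1 + i else a - (i - (b - a))

lemma pwFun2_inj (hn : 2 ≤ n) (a b : Fin n) : Function.Injective (pwFun2 a b) := by
  intro i j h
  unfold pwFun2 at h
  have key : ∀ i j : Fin n, i.val < (b-a).val → ¬ j.val < (b-a).val →
      a + 1 + i = a - (j - (b - a)) → False := by
    intro i j hi hj heq
    have hm : i + j + 1 = b - a := by linear_combination heq
    rw [veq, vadd', vadd', vone hn] at hm
    have := i.isLt; have := j.isLt; have := (b-a).isLt
    split_ifs at hm <;> omega
  split_ifs at h with h1 h2 h2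
  · linear_combination h
  · exact absurd h (fun h => key i j h1 h2 h)
  · exact absurd h (fun h => key j i h2 h1 h.symm)
  · linear_combination -h

noncomputable def pwEquiv2 (hn : 2 ≤ n) (a b : Fin n) : Equiv.Perm (Fin n) :=
  Equiv.ofBijective _ (Finite.injective_iff_bijective.1 (pwFun2_inj hn a b))

end constructions

section pwedges
variable {n : ℕ} [NeZero n]

lemma mval_facts (hn : 5 ≤ n) {a b : Fin n} (hab : a ≠ b) (hab1 : a + 1 ≠ b)
    (hba1 : b + 1 ≠ a) : 2 ≤ (b - a).val ∧ (b - a).val ≤ n - 2 := by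
  have h0 : (b - a).val ≠ 0 := fun h => hab (sub_val_eq_zero.1 h).symm
  have h1 : (b - a).val ≠ 1 := by
    intro h
    apply hab1
    have : b - a = 1 := by rw [veq, h, vone (by omega)]
    linear_combination -this
  have h2 : (b - a).val ≠ n - 1 := by
    intro h
    apply hba1
    have := (sub_val_eq_last (by omega)).1 h
    linear_combination this
  have := (b - a).isLt
  omega

lemma pw1_edges (hn : 5 ≤ n) (a b : Fin n) (hab : a ≠ b) (hab1 : a + 1 ≠ b)
    (hba1 : b + 1 ≠ a) :
    pathEdges (pwEquiv1 (by omega) a b) =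
      (hullF n \ {s(a, a + 1), s(b, b + 1)}) ∪ {s(a + 1, b + 1)} := by
  obtain ⟨hm2, hmn⟩ := mval_facts hn hab hab1 hba1
  have hmlt := (b - a).isLt
  ext e
  rw [mem_pathEdges' _ (by omega), Finset.mem_union, Finset.mem_sdiff, Finset.mem_insert,
    Finset.mem_singleton, Finset.mem_singleton, mem_hullF]
  simp only [not_or]
  simp only [pwEquiv1, Equiv.ofBijective_apply, pwFun1]
  constructor
  · rintro ⟨i, hi, rfl⟩
    have hi1 : (i + 1).val = i.val + 1 := vsucc (by omega) hi
    by_cases c1 : i.val + 1 < (b - a).val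
    · left
      rw [if_pos (by omega), if_pos (by rw [hi1]; omega)]
      have hx : b - i = (b - (i + 1)) + 1 := by ring
      rw [hx, Sym2.eq_swap]
      refine ⟨(hull_iff (by omega)).2 ⟨_, rfl⟩, ?_, ?_⟩
      · intro hcontra
        have h4 : b - (i + 1) = a := succ_inj (by omega) hcontra
        have h5 : i = (b - a) - 1 := by linear_combination -h4
        rw [veq, vpred (by omega) (by omega)] at h5
        omega
      · intro hcontra
        have h4 : b - (i + 1) = b := succ_inj (by omega) hcontra
        have h5 : (i + 1 : Fin n) = 0 := by linear_combination -h4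
        rw [veq, hi1] at h5
        simp at h5
    · by_cases c2 : i.val + 1 = (b - a).val
      · right
        rw [if_pos (by omega), if_neg (by rw [hi1]; omega)]
        have e1 : i + 1 = b - a := by rw [veq, hi1, c2]
        have e2 : b - i = a + 1 := by linear_combination -e1
        have e3 : b + 1 + (i + 1 - (b - a)) = b + 1 := by rw [e1]; ring
        rw [e2, e3]
      · left
        rw [if_neg (by omega), if_neg (by rw [hi1]; omega)]
        have hx : b + 1 + (i + 1 - (b - a)) = (b + 1 + (i - (b - a))) + 1 := by ring
        rw [hx]
        refine ⟨(hull_iff (by omega)).2 ⟨_, rfl⟩, ?_, ?_⟩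
        · intro hcontra
          have h4 : b + 1 + (i - (b - a)) = a := succ_inj (by omega) hcontra
          have h5 : i = -1 := by linear_combination h4
          rw [veq, vneg_one (by omega)] at h5
          omega
        · intro hcontra
          have h4 : b + 1 + (i - (b - a)) = b := succ_inj (by omega) hcontra
          have h5 : i = (b - a) - 1 := by linear_combination h4
          rw [veq, vpred (by omega) (by omega)] at h5
          omega
  · rintro (⟨he, hne1, hne2⟩ | rfl)
    · rw [hull_iff (by omega)] at he
      obtain ⟨x, rfl⟩ := he
      have hxa : x ≠ a := fun h => hne1 (by rw [h])
      have hxb : x ≠ b := fun h => hne2 (by rw [h])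
      have hd0 : (b - x).val ≠ 0 := fun h => hxb (sub_val_eq_zero.1 h).symm
      have hdm : (b - x).val ≠ (b - a).val := by
        intro h
        apply hxa
        have : b - x = b - a := veq.2 h
        linear_combination -this
      have hdlt := (b - x).isLt
      by_cases hc : (b - x).val < (b - a).val
      · -- x on the arc a+1 .. b-1 ; position  b - x - 1
        refine ⟨b - x - 1, ?_, ?_⟩
        · rw [vpred (by omega) (by omega)]
          omega
        · have hv : (b - x - 1).val = (b - x).val - 1 := vpred (by omega) (by omega)
          have e1 : (b - x - 1) + 1 = b - x := by ring
          rw [if_pos (by rw [hv]; omega), e1, if_pos (by omega)]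
          have e2 : b - (b - x - 1) = x + 1 := by ring
          have e3 : b - (b - x) = x := by ring
          rw [e2, e3, Sym2.eq_swap]
      · -- x on the arc b+1 .. a-1 ; position m + (x - b - 1)
        have hr : (x - b).val = n - (b - x).val := by
          have hx : x - b = -(b - x) := by ring
          rw [hx, vneg (fun h => hd0 (by rw [h]; rfl))]
        have hrv : (x - b - 1).val = (x - b).val - 1 := by
          refine vpred (by omega) ?_
          rw [hr]; omega
        have hiv : ((b - a) + (x - b - 1)).val = (b - a).val + (x - b).val - 1 := by
          rw [vadd', hrv]
          split_ifs with h
          · omega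
          · rw [hr] at h ⊢
            omega
        refine ⟨(b - a) + (x - b - 1), ?_, ?_⟩
        · rw [hiv, hr]
          omega
        · have e1 : ((b - a) + (x - b - 1)) + 1 = (b - a) + (x - b) := by ring
          rw [if_neg (by rw [hiv, hr]; omega), e1,
            if_neg (by rw [vadd', hr]; split_ifs <;> omega)]
          have e2 : b + 1 + ((b - a) + (x - b - 1) - (b - a)) = x := by ring
          have e3 : b + 1 + ((b - a) + (x - b) - (b - a)) = x + 1 := by ring
          rw [e2, e3]
    · -- the diagonal s(a+1, b+1), at position m-1
      refine ⟨(b - a) - 1, ?_, ?_⟩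
      · rw [vpred (by omega) (by omega)]
        omega
      · have hv : ((b - a) - 1).val = (b - a).val - 1 := vpred (by omega) (by omega)
        have e1 : ((b - a) - 1) + 1 = b - a := by ring
        rw [if_pos (by rw [hv]; omega), e1, if_neg (by omega)]
        have e2 : b - (b - a - 1) = a + 1 := by ring
        have e3 : b + 1 + (b - a - (b - a)) = b + 1 := by ring
        rw [e2, e3]


lemma pw2_edges (hn : 5 ≤ n) (a b : Fin n) (hab : a ≠ b) (hab1 : a + 1 ≠ b)
    (hba1 : b + 1 ≠ a) :
    pathEdges (pwEquiv2 (by omega) a b) =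
      (hullF n \ {s(a, a + 1), s(b, b + 1)}) ∪ {s(a, b)} := by
  obtain ⟨hm2, hmn⟩ := mval_facts hn hab hab1 hba1
  have hmlt := (b - a).isLt
  ext e
  rw [mem_pathEdges' _ (by omega), Finset.mem_union, Finset.mem_sdiff, Finset.mem_insert,
    Finset.mem_singleton, Finset.mem_singleton, mem_hullF]
  simp only [not_or]
  simp only [pwEquiv2, Equiv.ofBijective_apply, pwFun2]
  constructor
  · rintro ⟨i, hi, rfl⟩
    have hi1 : (i + 1).val = i.val + 1 := vsucc (by omega) hi
    by_cases c1 : i.val + 1 < (b - a).val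
    · left
      rw [if_pos (by omega), if_pos (by rw [hi1]; omega)]
      have hx : a + 1 + (i + 1) = (a + 1 + i) + 1 := by ring
      rw [hx]
      refine ⟨(hull_iff (by omega)).2 ⟨_, rfl⟩, ?_, ?_⟩
      · intro hcontra
        have h4 : a + 1 + i = a := succ_inj (by omega) hcontra
        have h5 : i = -1 := by linear_combination h4
        rw [veq, vneg_one (by omega)] at h5
        omega
      · intro hcontra
        have h4 : a + 1 + i = b := succ_inj (by omega) hcontra
        have h5 : i = (b - a) - 1 := by linear_combination h4
        rw [veq, vpred (by omega) (by omega)] at h5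
        omega
    · by_cases c2 : i.val + 1 = (b - a).val
      · right
        rw [if_pos (by omega), if_neg (by rw [hi1]; omega)]
        have e1 : i + 1 = b - a := by rw [veq, hi1, c2]
        have e2 : a + 1 + i = b := by linear_combination e1
        have e3 : a - (i + 1 - (b - a)) = a := by rw [e1]; ring
        rw [e2, e3, Sym2.eq_swap]
      · left
        rw [if_neg (by omega), if_neg (by rw [hi1]; omega)]
        have hx : a - (i - (b - a)) = (a - (i + 1 - (b - a))) + 1 := by ring
        rw [hx, Sym2.eq_swap]
        refine ⟨(hull_iff (by omega)).2 ⟨_, rfl⟩, ?_, ?_⟩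
        · intro hcontra
          have h4 : a - (i + 1 - (b - a)) = a := succ_inj (by omega) hcontra
          have h5 : i = (b - a) - 1 := by linear_combination -h4
          rw [veq, vpred (by omega) (by omega)] at h5
          omega
        · intro hcontra
          have h4 : a - (i + 1 - (b - a)) = b := succ_inj (by omega) hcontra
          have h5 : i = -1 := by linear_combination -h4
          rw [veq, vneg_one (by omega)] at h5
          omega
  · rintro (⟨he, hne1, hne2⟩ | rfl)
    · rw [hull_iff (by omega)] at he
      obtain ⟨x, rfl⟩ := he
      have hxa : x ≠ a := fun h => hne1 (by rw [h])
      have hxb : x ≠ b := fun h => hne2 (by rw [h])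
      have hd0 : (x - a).val ≠ 0 := fun h => hxa (sub_val_eq_zero.1 h)
      have hdm : (x - a).val ≠ (b - a).val := by
        intro h
        apply hxb
        have : x - a = b - a := veq.2 h
        linear_combination this
      have hdlt := (x - a).isLt
      by_cases hc : (x - a).val < (b - a).val
      · refine ⟨x - a - 1, ?_, ?_⟩
        · rw [vpred (by omega) (by omega)]
          omega
        · have hv : (x - a - 1).val = (x - a).val - 1 := vpred (by omega) (by omega)
          have e1 : (x - a - 1) + 1 = x - a := by ring
          rw [if_pos (by rw [hv]; omega), e1, if_pos (by omega)]
          have e2 : a + 1 + (x - a - 1) = x := by ring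
          have e3 : a + 1 + (x - a) = x + 1 := by ring
          rw [e2, e3]
      · have hr : (a - x).val = n - (x - a).val := by
          have hx : a - x = -(x - a) := by ring
          rw [hx, vneg (fun h => hd0 (by rw [h]; rfl))]
        have hrv : (a - x - 1).val = (a - x).val - 1 := by
          refine vpred (by omega) ?_
          rw [hr]; omega
        have hiv : ((b - a) + (a - x - 1)).val = (b - a).val + (a - x).val - 1 := by
          rw [vadd', hrv]
          split_ifs with h
          · omega
          · rw [hr] at h ⊢
            omega
        refine ⟨(b - a) + (a - x - 1), ?_, ?_⟩
        · rw [hiv, hr]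
          omega
        · have e1 : ((b - a) + (a - x - 1)) + 1 = (b - a) + (a - x) := by ring
          rw [if_neg (by rw [hiv, hr]; omega), e1,
            if_neg (by rw [vadd', hr]; split_ifs <;> omega)]
          have e2 : a - ((b - a) + (a - x - 1) - (b - a)) = x + 1 := by ring
          have e3 : a - ((b - a) + (a - x) - (b - a)) = x := by ring
          rw [e2, e3, Sym2.eq_swap]
    · refine ⟨(b - a) - 1, ?_, ?_⟩
      · rw [vpred (by omega) (by omega)]
        omega
      · have hv : ((b - a) - 1).val = (b - a).val - 1 := vpred (by omega) (by omega)
        have e1 : ((b - a) - 1) + 1 = b - a := by ring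
        rw [if_pos (by rw [hv]; omega), e1, if_neg (by omega)]
        have e2 : a + 1 + (b - a - 1) = b := by ring
        have e3 : a - (b - a - (b - a)) = a := by ring
        rw [e2, e3, Sym2.eq_swap]

end pwedges

section pvert
variable {n : ℕ} [NeZero n]

lemma edge_card (hn : 2 ≤ n) (t : PVert n) : t.1.card = n - 1 := by
  obtain ⟨p, hp⟩ := t.2.1
  rw [hp, card_pathEdges p hn]

lemma boundary_eq (hn : 3 ≤ n) {t : PVert n} (ht : IsBoundary t) {f : Sym2 (Fin n)}
    (hf : IsHullEdge f) (hft : f ∉ t.1) : t.1 = hullF n \ {f} := by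
  have hsub : t.1 ⊆ hullF n := fun e he => mem_hullF.2 (ht e he)
  have hc1 : t.1.card = n - 1 := edge_card (by omega) t
  have hc2 : (hullF n).card = n := card_hullF hn
  have hcard : (hullF n \ t.1).card = 1 := by
    rw [Finset.card_sdiff_of_subset hsub, hc1, hc2]
    omega
  have hfm : ({f} : Finset (Sym2 (Fin n))) ⊆ hullF n \ t.1 := by
    rw [Finset.singleton_subset_iff, Finset.mem_sdiff, mem_hullF]
    exact ⟨hf, hft⟩
  have heq : hullF n \ t.1 = {f} :=
    (Finset.eq_of_subset_of_card_le hfm (by rw [hcard, Finset.card_singleton])).symm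
  have h2 := Finset.sdiff_sdiff_eq_self hsub
  rw [← h2, heq]

lemma adj_swap {u t : PVert n} (hadj : (pathGraph n).Adj u t) (hn : 2 ≤ n) :
    ∃ α β, α ∈ u.1 ∧ β ∉ u.1 ∧ u.1 \ t.1 = {α} ∧ t.1 \ u.1 = {β} ∧
      t.1 = (u.1 \ {α}) ∪ {β} := by
  obtain ⟨hne, hcard⟩ := hadj
  have hdisj : Disjoint (u.1 \ t.1) (t.1 \ u.1) := disjoint_sdiff_sdiff
  rw [Finset.card_union_of_disjoint hdisj] at hcard
  have hcc : (u.1 \ t.1).card = (t.1 \ u.1).card :=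
    Finset.card_sdiff_comm (by rw [edge_card hn, edge_card hn])
  have h1 : (u.1 \ t.1).card = 1 := by omega
  have h2 : (t.1 \ u.1).card = 1 := by omega
  obtain ⟨α, hα⟩ := Finset.card_eq_one.1 h1
  obtain ⟨β, hβ⟩ := Finset.card_eq_one.1 h2
  have hαu : α ∈ u.1 \ t.1 := by rw [hα]; exact Finset.mem_singleton_self α
  have hβu : β ∈ t.1 \ u.1 := by rw [hβ]; exact Finset.mem_singleton_self β
  rw [Finset.mem_sdiff] at hαu hβu
  refine ⟨α, β, hαu.1, hβu.2, hα, hβ, ?_⟩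
  ext x
  simp only [Finset.mem_union, Finset.mem_sdiff, Finset.mem_singleton]
  constructor
  · intro hx
    by_cases hxu : x ∈ u.1
    · by_cases hxα : x = α
      · subst hxα; exact absurd hx hαu.2
      · left; exact ⟨hxu, hxα⟩
    · right
      have hmem : x ∈ t.1 \ u.1 := Finset.mem_sdiff.2 ⟨hx, hxu⟩
      rw [hβ] at hmem
      exact Finset.mem_singleton.1 hmem
  · rintro (⟨hxu, hxα⟩ | rfl)
    · by_contra hxt
      have hmem : x ∈ u.1 \ t.1 := Finset.mem_sdiff.2 ⟨hxu, hxt⟩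
      rw [hα] at hmem
      exact hxα (Finset.mem_singleton.1 hmem)
    · exact hβu.1

lemma adj_of_sdiff {t t' : PVert n} {α β : Sym2 (Fin n)} (hne : t ≠ t')
    (h1 : t.1 \ t'.1 = {α}) (h2 : t'.1 \ t.1 = {β}) : (pathGraph n).Adj t t' := by
  have hα : α ∈ t.1 \ t'.1 := by rw [h1]; exact Finset.mem_singleton_self α
  have hβ : β ∈ t'.1 \ t.1 := by rw [h2]; exact Finset.mem_singleton_self β
  rw [Finset.mem_sdiff] at hα hβ
  have hαβ : α ≠ β := fun h => hβ.2 (h ▸ hα.1)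
  refine ⟨hne, ?_⟩
  rw [h1, h2, Finset.card_union_of_disjoint (Finset.disjoint_singleton.2 hαβ),
    Finset.card_singleton, Finset.card_singleton]

lemma bsdiff {f f' : Sym2 (Fin n)} (hf' : IsHullEdge f') (hne : f ≠ f') :
    (hullF n \ {f}) \ (hullF n \ {f'}) = {f'} := by
  ext x
  constructor
  · intro hx
    simp only [Finset.mem_sdiff, Finset.mem_singleton] at hx
    obtain ⟨⟨hxH, hxf⟩, h2⟩ := hx
    rw [Finset.mem_singleton]
    by_contra hxf'
    exact h2 ⟨hxH, hxf'⟩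
  · intro hx
    rw [Finset.mem_singleton] at hx
    subst hx
    rw [Finset.mem_sdiff, Finset.mem_sdiff, Finset.mem_sdiff, Finset.mem_singleton,
      Finset.mem_singleton]
    exact ⟨⟨mem_hullF.2 hf', fun h => hne h.symm⟩, fun h => h.2 rfl⟩

lemma boundary_adj {t t' : PVert n} {f f' : Sym2 (Fin n)}
    (hf : IsHullEdge f) (hf' : IsHullEdge f') (hne : f ≠ f')
    (ht : t.1 = hullF n \ {f}) (ht' : t'.1 = hullF n \ {f'}) :
    (pathGraph n).Adj t t' := by
  have h1 : t.1 \ t'.1 = {f'} := by rw [ht, ht']; exact bsdiff hf' hne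
  have h2 : t'.1 \ t.1 = {f} := by rw [ht, ht']; exact bsdiff hf hne.symm
  refine adj_of_sdiff ?_ h1 h2
  intro h
  rw [h, Finset.sdiff_self] at h1
  exact Finset.singleton_ne_empty f' h1.symm

lemma neighbor_form (hn : 5 ≤ n) {e1 e2 : Sym2 (Fin n)} (h1 : IsHullEdge e1)
    (h2 : IsHullEdge e2) (h12 : e1 ≠ e2) {u v t : PVert n}
    (hu : u.1 = hullF n \ {e1}) (hv : v.1 = hullF n \ {e2})
    (hadj1 : (pathGraph n).Adj u t) (hadj2 : (pathGraph n).Adj v t) :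
    (∃ f, IsHullEdge f ∧ t.1 = hullF n \ {f}) ∨
      (∃ d, d ∉ hullF n ∧ t.1 = (hullF n \ {e1, e2}) ∪ {d}) := by
  obtain ⟨α, β, hαu, hβu, hsd1, hsd2, ht⟩ := adj_swap hadj1 (by omega)
  have hαH : α ∈ hullF n := by
    rw [hu] at hαu
    exact (Finset.mem_sdiff.1 hαu).1
  have hαe1 : α ≠ e1 := by
    rw [hu] at hαu
    have := (Finset.mem_sdiff.1 hαu).2
    rwa [Finset.mem_singleton] at this
  have hαβ : α ≠ β := fun h => hβu (h ▸ hαu)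
  by_cases hβ : β = e1
  · left
    subst hβ
    refine ⟨α, mem_hullF.1 hαH, ?_⟩
    rw [ht, hu]
    ext x
    simp only [Finset.mem_union, Finset.mem_sdiff, Finset.mem_singleton]
    constructor
    · rintro (⟨⟨hx, _⟩, hxα⟩ | rfl)
      · exact ⟨hx, hxα⟩
      · exact ⟨mem_hullF.2 h1, fun hc => hαe1 hc.symm⟩
    · rintro ⟨hx, hxα⟩
      by_cases hxe : x = β
      · right; exact hxe
      · left; exact ⟨⟨hx, hxe⟩, hxα⟩
  · right
    have hβH : β ∉ hullF n := by
      intro hc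
      apply hβu
      rw [hu, Finset.mem_sdiff, Finset.mem_singleton]
      exact ⟨hc, hβ⟩
    have hα2 : α = e2 := by
      by_contra hc
      have he1v : e1 ∈ v.1 := by
        rw [hv, Finset.mem_sdiff, Finset.mem_singleton, mem_hullF]
        exact ⟨h1, h12⟩
      have he1t : e1 ∉ t.1 := by
        rw [ht]
        intro hmem
        rw [Finset.mem_union, Finset.mem_sdiff, Finset.mem_singleton,
          Finset.mem_singleton] at hmem
        rcases hmem with ⟨he1u, _⟩ | he1β
        · rw [hu, Finset.mem_sdiff, Finset.mem_singleton] at he1u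
          exact he1u.2 rfl
        · exact hβ he1β.symm
      have hαv : α ∈ v.1 := by
        rw [hv, Finset.mem_sdiff, Finset.mem_singleton]
        exact ⟨hαH, hc⟩
      have hαt : α ∉ t.1 := by
        rw [ht]
        intro hmem
        rw [Finset.mem_union, Finset.mem_sdiff, Finset.mem_singleton,
          Finset.mem_singleton] at hmem
        rcases hmem with ⟨_, hαα⟩ | hαβ'
        · exact hαα rfl
        · exact hαβ hαβ'
      have hβt : β ∈ t.1 := by
        rw [ht]
        exact Finset.mem_union_right _ (Finset.mem_singleton_self β)
      have hβv : β ∉ v.1 := by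
        rw [hv, Finset.mem_sdiff]
        rintro ⟨hc2, _⟩
        exact hβH hc2
      have hsub : ({e1, α, β} : Finset (Sym2 (Fin n))) ⊆ v.1 \ t.1 ∪ t.1 \ v.1 := by
        intro x hx
        simp only [Finset.mem_insert, Finset.mem_singleton] at hx
        rcases hx with rfl | rfl | rfl
        · exact Finset.mem_union_left _ (Finset.mem_sdiff.2 ⟨he1v, he1t⟩)
        · exact Finset.mem_union_left _ (Finset.mem_sdiff.2 ⟨hαv, hαt⟩)
        · exact Finset.mem_union_right _ (Finset.mem_sdiff.2 ⟨hβt, hβv⟩)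
      have hcard3 : ({e1, α, β} : Finset (Sym2 (Fin n))).card = 3 := by
        rw [Finset.card_insert_of_notMem, Finset.card_insert_of_notMem,
          Finset.card_singleton]
        · rw [Finset.mem_singleton]
          exact hαβ
        · simp only [Finset.mem_insert, Finset.mem_singleton]
          rintro (h | h)
          · exact hαe1 h.symm
          · exact hβ h.symm
      have hle := Finset.card_le_card hsub
      rw [hcard3, hadj2.2] at hle
      omega
    refine ⟨β, hβH, ?_⟩
    rw [ht, hu, hα2]
    ext x
    simp only [Finset.mem_union, Finset.mem_sdiff, Finset.mem_singleton, Finset.mem_insert]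
    tauto

end pvert

section core
variable {n : ℕ} [NeZero n]

lemma hull_succ_mem (hn : 2 ≤ n) (x : Fin n) : s(x, x + 1) ∈ hullF n :=
  mem_hullF.2 ((hull_iff hn).2 ⟨x, rfl⟩)

lemma ne_add_one (hn : 2 ≤ n) (x : Fin n) : x ≠ x + 1 := by
  intro h
  rw [veq, vaddone hn] at h
  have := x.isLt
  split_ifs at h <;> omega

lemma ne_add_two (hn : 3 ≤ n) (x : Fin n) : x ≠ x + 1 + 1 := by
  intro h
  rw [veq, vaddone (by omega), vaddone (by omega)] at h
  have := x.isLt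
  split_ifs at h <;> omega

lemma pred_succ_edge (x : Fin n) : s(x - 1, x) = s(x - 1, (x - 1) + 1) := by
  congr 1
  ring

/-- if the two missing hull edges share the vertex a+1, then there is no
one-diagonal common neighbour -/
lemma no_shared_diag (hn : 5 ≤ n) (a : Fin n) {t : PVert n} {d : Sym2 (Fin n)}
    (hd : d ∉ hullF n)
    (ht : t.1 = (hullF n \ {s(a, a + 1), s(a + 1, a + 1 + 1)}) ∪ {d}) : False := by
  obtain ⟨p, hp⟩ := t.2.1
  have hmem : ∀ x : Sym2 (Fin n), x ∈ t.1 ↔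
      (x ∈ hullF n ∧ x ≠ s(a, a + 1) ∧ x ≠ s(a + 1, a + 1 + 1)) ∨ x = d := by
    intro x
    rw [ht, Finset.mem_union, Finset.mem_sdiff, Finset.mem_insert, Finset.mem_singleton,
      Finset.mem_singleton]
    tauto
  -- every edge of t at a+1 is d
  have step1 : ∀ e ∈ t.1, a + 1 ∈ e → e = d := by
    intro e he hx
    rcases (hmem e).1 he with ⟨heH, hne1, hne2⟩ | rfl
    · exfalso
      rcases hull_mem_endpoints (by omega) (mem_hullF.1 heH) hx with h | h
      · apply hne1
        rw [h, pred_succ_edge]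
        congr 1 <;> ring
      · exact hne2 h
    · rfl
  -- hence a+1 ∈ d
  have hd1 : a + 1 ∈ d := by
    have hdeg := degIn_ge_one p (by omega) (a + 1)
    rw [← hp] at hdeg
    simp only [degIn] at hdeg
    obtain ⟨e, he⟩ := Finset.card_pos.1 hdeg
    rw [Finset.mem_filter] at he
    have hed := step1 e he.1 he.2
    rw [hed] at he
    exact he.2
  obtain ⟨y, hy⟩ := Sym2.mem_iff_exists.1 hd1
  have hya : y ≠ a := by
    intro h
    apply hd
    rw [hy, h, Sym2.eq_swap]
    exact hull_succ_mem (by omega) a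
  have hy2 : y ≠ a + 1 + 1 := by
    intro h
    apply hd
    rw [hy, h]
    exact hull_succ_mem (by omega) (a + 1)
  -- degree bounds at a, a+1, a+2
  have D1 : degIn t.1 a ≤ 1 := by
    simp only [degIn]
    refine le_trans (Finset.card_le_card ?_) (le_of_eq (Finset.card_singleton (s(a - 1, a))))
    intro e he
    rw [Finset.mem_filter] at he
    obtain ⟨het, hex⟩ := he
    rw [Finset.mem_singleton]
    rcases (hmem e).1 het with ⟨heH, hne1, hne2⟩ | rfl
    · rcases hull_mem_endpoints (by omega) (mem_hullF.1 heH) hex with h | h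
      · exact h
      · exact absurd h hne1
    · exfalso
      rw [hy, Sym2.mem_iff] at hex
      rcases hex with h | h
      · exact ne_add_one (by omega) a h
      · exact hya h.symm
  have D2 : degIn t.1 (a + 1 + 1) ≤ 1 := by
    simp only [degIn]
    refine le_trans (Finset.card_le_card ?_)
      (le_of_eq (Finset.card_singleton (s(a + 1 + 1, a + 1 + 1 + 1))))
    intro e he
    rw [Finset.mem_filter] at he
    obtain ⟨het, hex⟩ := he
    rw [Finset.mem_singleton]
    rcases (hmem e).1 het with ⟨heH, hne1, hne2⟩ | rfl
    · rcases hull_mem_endpoints (by omega) (mem_hullF.1 heH) hex with h | h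
      · exfalso
        apply hne2
        rw [h, pred_succ_edge]
        congr 1 <;> ring
      · exact h
    · exfalso
      rw [hy, Sym2.mem_iff] at hex
      rcases hex with h | h
      · exact ne_add_one (by omega) (a + 1) h.symm
      · exact hy2 h.symm
  have D3 : degIn t.1 (a + 1) ≤ 1 := by
    simp only [degIn]
    refine le_trans (Finset.card_le_card ?_) (le_of_eq (Finset.card_singleton d))
    intro e he
    rw [Finset.mem_filter] at he
    rw [Finset.mem_singleton]
    exact step1 e he.1 he.2
  -- pigeonhole on path endpoints
  have claim : ∀ x : Fin n, degIn t.1 (p x) ≤ 1 → x.val = 0 ∨ x.val = n - 1 := by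
    intro x hx
    by_contra hc
    push_neg at hc
    have hlt := x.isLt
    have hdi := degIn_interior p (by omega) (i := x) (by omega) (by omega)
    rw [← hp] at hdi
    omega
  have c1 := claim (p.symm a) (by rwa [Equiv.apply_symm_apply])
  have c2 := claim (p.symm (a + 1)) (by rwa [Equiv.apply_symm_apply])
  have c3 := claim (p.symm (a + 1 + 1)) (by rwa [Equiv.apply_symm_apply])
  have ne12 : (p.symm a).val ≠ (p.symm (a + 1)).val := by
    intro h
    exact ne_add_one (by omega) a (p.symm.injective (veq.2 h))
  have ne23 : (p.symm (a + 1)).val ≠ (p.symm (a + 1 + 1)).val := by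
    intro h
    exact ne_add_one (by omega) (a + 1) (p.symm.injective (veq.2 h))
  have ne13 : (p.symm a).val ≠ (p.symm (a + 1 + 1)).val := by
    intro h
    exact ne_add_two (by omega) a (p.symm.injective (veq.2 h))
  omega


/-- the diagonal cannot connect  a+1  with  b  (it would close a cycle) -/
lemma not_path_close (hn : 5 ≤ n) (a b : Fin n) (hab : a ≠ b) (hab1 : a + 1 ≠ b)
    (hba1 : b + 1 ≠ a) {t : PVert n} (hd : s(a + 1, b) ∉ hullF n)
    (ht : t.1 = (hullF n \ {s(a, a + 1), s(b, b + 1)}) ∪ {s(a + 1, b)}) : False := by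
  obtain ⟨p, hp⟩ := t.2.1
  obtain ⟨hm2, hmn⟩ := mval_facts hn hab hab1 hba1
  set m := (b - a).val with hmdef
  have hcast : ∀ r : ℕ, r < m → ((r : Fin n)).val = r := by
    intro r hr
    rw [Fin.val_natCast]
    exact Nat.mod_eq_of_lt (by omega)
  set S : Finset (Fin n) := (Finset.range m).image (fun r : ℕ => a + 1 + (r : Fin n)) with hS
  have hmemS : ∀ r : ℕ, r < m → a + 1 + (r : Fin n) ∈ S := by
    intro r hr
    rw [hS]
    exact Finset.mem_image.2 ⟨r, Finset.mem_range.2 hr, rfl⟩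
  have hcardS : S.card = m := by
    rw [hS, Finset.card_image_of_injOn, Finset.card_range]
    intro r hr r' hr' h
    rw [Finset.mem_coe, Finset.mem_range] at hr hr'
    have h2 : (r : Fin n) = (r' : Fin n) := by linear_combination h
    rw [veq, hcast r hr, hcast r' hr'] at h2
    exact h2
  have hbS : b ∈ S := by
    have h1 : ((m - 1 : ℕ) : Fin n) = b - a - 1 := by
      rw [veq, hcast (m-1) (by omega), vpred (by omega) (by omega)]
    have h2 : a + 1 + ((m - 1 : ℕ) : Fin n) = b := by
      rw [h1]; ring
    rw [← h2]
    exact hmemS (m - 1) (by omega)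
  have ha1S : a + 1 ∈ S := by
    have h2 : a + 1 + ((0 : ℕ) : Fin n) = a + 1 := by
      rw [Nat.cast_zero]; ring
    rw [← h2]
    exact hmemS 0 (by omega)
  -- the edges inside S
  have hGsub : insert (s(a + 1, b)) ((Finset.range (m - 1)).image
      (fun k : ℕ => s(a + 1 + (k : Fin n), a + 1 + (k : Fin n) + 1))) ⊆
      t.1.filter (fun e => ∀ y ∈ e, y ∈ S) := by
    intro e he
    rw [Finset.mem_insert] at he
    rcases he with rfl | he
    · rw [Finset.mem_filter]
      refine ⟨by rw [ht]; exact Finset.mem_union_right _ (Finset.mem_singleton_self _), ?_⟩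
      intro z hz
      rw [Sym2.mem_iff] at hz
      rcases hz with rfl | rfl
      · exact ha1S
      · exact hbS
    · rw [Finset.mem_image] at he
      obtain ⟨k, hk, rfl⟩ := he
      rw [Finset.mem_range] at hk
      rw [Finset.mem_filter]
      constructor
      · rw [ht]
        apply Finset.mem_union_left
        rw [Finset.mem_sdiff, Finset.mem_insert, Finset.mem_singleton]
        simp only [not_or]
        refine ⟨hull_succ_mem (by omega) _, ?_, ?_⟩
        · intro hc
          have h4 : a + 1 + (k : Fin n) = a := succ_inj (by omega) hc
          have h5 : (k : Fin n) = -1 := by linear_combination h4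
          rw [veq, hcast k (by omega), vneg_one (by omega)] at h5
          omega
        · intro hc
          have h4 : a + 1 + (k : Fin n) = b := succ_inj (by omega) hc
          have h5 : (k : Fin n) = b - a - 1 := by linear_combination h4
          rw [veq, hcast k (by omega), vpred (by omega) (by omega)] at h5
          omega
      · intro z hz
        rw [Sym2.mem_iff] at hz
        rcases hz with rfl | rfl
        · exact hmemS k (by omega)
        · have h6 : a + 1 + (k : Fin n) + 1 = a + 1 + ((k + 1 : ℕ) : Fin n) := by
            rw [Nat.cast_add, Nat.cast_one]; ring
          rw [h6]
          exact hmemS (k + 1) (by omega)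
  have hGcard : (insert (s(a + 1, b)) ((Finset.range (m - 1)).image
      (fun k : ℕ => s(a + 1 + (k : Fin n), a + 1 + (k : Fin n) + 1)))).card = m := by
    rw [Finset.card_insert_of_notMem, Finset.card_image_of_injOn, Finset.card_range]
    · omega
    · intro k hk k' hk' h
      rw [Finset.mem_coe, Finset.mem_range] at hk hk'
      have h2 := succ_inj (n := n) (by omega) h
      have h3 : (k : Fin n) = (k' : Fin n) := by linear_combination h2
      rw [veq, hcast k (by omega), hcast k' (by omega)] at h3
      exact h3
    · intro hc
      rw [Finset.mem_image] at hc
      obtain ⟨k, _, hk⟩ := hc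
      exact hd (hk ▸ hull_succ_mem (by omega) _)
  have hbound := edges_within_lt p (by omega) S
  rw [← hp] at hbound
  have hle := Finset.card_le_card hGsub
  rw [hGcard] at hle
  omega


lemma diag_cases (hn : 5 ≤ n) (a b : Fin n) (hab : a ≠ b) (hab1 : a + 1 ≠ b)
    (hba1 : b + 1 ≠ a) {t : PVert n} {d : Sym2 (Fin n)}
    (hd : d ∉ hullF n)
    (ht : t.1 = (hullF n \ {s(a, a + 1), s(b, b + 1)}) ∪ {d}) :
    d = s(a + 1, b + 1) ∨ d = s(a, b) := by
  obtain ⟨p, hp⟩ := t.2.1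
  have hdt : d ∈ t.1 := by
    rw [ht]
    exact Finset.mem_union_right _ (Finset.mem_singleton_self _)
  have hdiag : ¬ d.IsDiag := by
    apply pathEdges_not_isDiag p
    rwa [hp] at hdt
  obtain ⟨⟨y, z⟩, hw⟩ := Quot.exists_rep d
  have hyz : d = s(y, z) := hw.symm
  have hyzne : y ≠ z := by
    intro h
    apply hdiag
    rw [hyz, h]
    exact Sym2.mk_isDiag_iff.2 rfl
  have hmem : ∀ x : Sym2 (Fin n), x ∈ t.1 ↔
      (x ∈ hullF n ∧ x ≠ s(a, a + 1) ∧ x ≠ s(b, b + 1)) ∨ x = d := by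
    intro x
    rw [ht, Finset.mem_union, Finset.mem_sdiff, Finset.mem_insert, Finset.mem_singleton,
      Finset.mem_singleton]
    tauto
  -- both endpoints of d lie in {a, a+1, b, b+1}
  have corner : ∀ x : Fin n, x ∈ d → x = a ∨ x = a + 1 ∨ x = b ∨ x = b + 1 := by
    intro x hx
    by_contra hc
    push_neg at hc
    obtain ⟨hxa, hxa1, hxb, hxb1⟩ := hc
    have he1 : s(x - 1, x) ∈ t.1 := by
      rw [hmem]
      left
      refine ⟨by rw [pred_succ_edge]; exact hull_succ_mem (by omega) _, ?_, ?_⟩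
      · intro hcon
        rw [pred_succ_edge] at hcon
        have := succ_inj (n := n) (by omega) hcon
        apply hxa1
        linear_combination this
      · intro hcon
        rw [pred_succ_edge] at hcon
        have := succ_inj (n := n) (by omega) hcon
        apply hxb1
        linear_combination this
    have he2 : s(x, x + 1) ∈ t.1 := by
      rw [hmem]
      left
      refine ⟨hull_succ_mem (by omega) _, ?_, ?_⟩
      · intro hcon
        exact hxa (succ_inj (by omega) hcon)
      · intro hcon
        exact hxb (succ_inj (by omega) hcon)
    have hne12 : s(x - 1, x) ≠ s(x, x + 1) := by
      intro hcon
      rw [pred_succ_edge] at hcon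
      have h2 := succ_inj (n := n) (by omega) hcon
      have h3 : (1 : Fin n) = 0 := by linear_combination -h2
      rw [veq, vone (by omega)] at h3
      simp at h3
    have hne1d : s(x - 1, x) ≠ d := by
      intro hcon
      apply hd
      rw [← hcon, pred_succ_edge]
      exact hull_succ_mem (by omega) _
    have hne2d : s(x, x + 1) ≠ d := by
      intro hcon
      exact hd (hcon ▸ hull_succ_mem (by omega) x)
    have hsub : ({s(x - 1, x), s(x, x + 1), d} : Finset (Sym2 (Fin n))) ⊆
        t.1.filter (fun e => x ∈ e) := by
      intro e he
      simp only [Finset.mem_insert, Finset.mem_singleton] at he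
      rw [Finset.mem_filter]
      rcases he with rfl | rfl | rfl
      · exact ⟨he1, by rw [Sym2.mem_iff]; right; rfl⟩
      · exact ⟨he2, by rw [Sym2.mem_iff]; left; rfl⟩
      · exact ⟨hdt, hx⟩
    have hcard3 : ({s(x - 1, x), s(x, x + 1), d} : Finset (Sym2 (Fin n))).card = 3 := by
      rw [Finset.card_insert_of_notMem, Finset.card_insert_of_notMem,
        Finset.card_singleton]
      · rw [Finset.mem_singleton]
        exact hne2d
      · simp only [Finset.mem_insert, Finset.mem_singleton]
        rintro (h | h)
        · exact hne12 h
        · exact hne1d h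
    have hdeg := degIn_le_two p (by omega) x
    rw [← hp] at hdeg
    simp only [degIn] at hdeg
    have := Finset.card_le_card hsub
    omega
  have hy' := corner y (by rw [hyz, Sym2.mem_iff]; left; rfl)
  have hz' := corner z (by rw [hyz, Sym2.mem_iff]; right; rfl)
  -- now enumerate
  have swap_close : d = s(a, b + 1) → False := by
    intro hcon
    refine not_path_close hn b a hab.symm hba1 hab1 (t := t) ?_ ?_
    · rw [Sym2.eq_swap, ← hcon]
      exact hd
    · rw [ht, hcon, (Sym2.eq_swap : s(a, b + 1) = s(b + 1, a)),
        Finset.pair_comm (s(a, a + 1)) (s(b, b + 1))]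
  have close : d = s(a + 1, b) → False := by
    intro hcon
    exact not_path_close hn a b hab hab1 hba1 (hcon ▸ hd) (by rw [ht, hcon])
  have hullad : d ∉ hullF n := hd
  rcases hy' with rfl | rfl | rfl | rfl <;> rcases hz' with rfl | rfl | rfl | rfl
  · exact absurd rfl hyzne
  · exact absurd (hyz ▸ hull_succ_mem (by omega) y) hd
  · right; rw [hyz]
  · exact absurd (swap_close hyz) id
  · exact absurd (by rw [hyz, Sym2.eq_swap] : d = s(z, z + 1))
      (fun h => hd (h ▸ hull_succ_mem (by omega) z))
  · exact absurd rfl hyzne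
  · exact absurd (close hyz) id
  · left; rw [hyz]
  · right; rw [hyz, Sym2.eq_swap]
  · exact absurd (close (by rw [hyz, Sym2.eq_swap])) id
  · exact absurd rfl hyzne
  · exact absurd (hyz ▸ hull_succ_mem (by omega) y) hd
  · exact absurd (swap_close (by rw [hyz, Sym2.eq_swap])) id
  · left; rw [hyz, Sym2.eq_swap]
  · exact absurd (by rw [hyz, Sym2.eq_swap] : d = s(z, z + 1))
      (fun h => hd (h ▸ hull_succ_mem (by omega) z))
  · exact absurd rfl hyzne


lemma sdiff_A {e1 e2 d : Sym2 (Fin n)} (h2 : e2 ∈ hullF n) (h12 : e2 ≠ e1)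
    (hd : d ∉ hullF n) :
    (hullF n \ {e1}) \ ((hullF n \ {e1, e2}) ∪ {d}) = {e2} := by
  ext x
  simp only [Finset.mem_sdiff, Finset.mem_union, Finset.mem_singleton, Finset.mem_insert,
    not_or]
  constructor
  · rintro ⟨⟨hxH, hx1⟩, hnot1, hnot2⟩
    by_contra hx2
    exact hnot1 ⟨hxH, hx1, hx2⟩
  · rintro rfl
    exact ⟨⟨h2, h12⟩, fun hcon => hcon.2.2 rfl, fun h => hd (h ▸ h2)⟩

lemma sdiff_B {e1 e2 d : Sym2 (Fin n)} (hd : d ∉ hullF n) :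
    ((hullF n \ {e1, e2}) ∪ {d}) \ (hullF n \ {e1}) = {d} := by
  ext x
  simp only [Finset.mem_sdiff, Finset.mem_union, Finset.mem_insert, Finset.mem_singleton,
    not_or, not_and, not_not]
  constructor
  · rintro ⟨⟨hxH, hx1, hx2⟩ | rfl, hnot⟩
    · exact absurd (hnot hxH) hx1
    · rfl
  · rintro rfl
    exact ⟨Or.inr rfl, fun h => absurd h hd⟩

lemma sdiff_C {e1 e2 d d' : Sym2 (Fin n)} (hd : d ∉ hullF n) (hdd : d ≠ d') :
    ((hullF n \ {e1, e2}) ∪ {d}) \ ((hullF n \ {e1, e2}) ∪ {d'}) = {d} := by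
  ext x
  simp only [Finset.mem_sdiff, Finset.mem_union, Finset.mem_singleton, Finset.mem_insert,
    not_or]
  constructor
  · rintro ⟨hx | rfl, hnot⟩
    · exact absurd hx hnot.1
    · rfl
  · rintro rfl
    refine ⟨Or.inr rfl, ⟨?_, hdd⟩⟩
    rintro ⟨hdH, _⟩
    exact hd hdH

lemma boundary_not_adj {e1 e2 f d : Sym2 (Fin n)} (h1 : e1 ∈ hullF n) (h2 : e2 ∈ hullF n)
    (h12 : e1 ≠ e2) (hf1 : f ≠ e1) (hf2 : f ≠ e2) (hd : d ∉ hullF n)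
    {x w : PVert n} (hx : x.1 = hullF n \ {f}) (hw : w.1 = (hullF n \ {e1, e2}) ∪ {d}) :
    ¬ (pathGraph n).Adj x w := by
  rintro ⟨-, hcard⟩
  have hsub : ({e1, e2, d} : Finset (Sym2 (Fin n))) ⊆ x.1 \ w.1 ∪ w.1 \ x.1 := by
    intro z hz
    simp only [Finset.mem_insert, Finset.mem_singleton] at hz
    have he1x : e1 ∈ x.1 := by
      rw [hx, Finset.mem_sdiff, Finset.mem_singleton]
      exact ⟨h1, fun h => hf1 h.symm⟩
    have he2x : e2 ∈ x.1 := by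
      rw [hx, Finset.mem_sdiff, Finset.mem_singleton]
      exact ⟨h2, fun h => hf2 h.symm⟩
    have he1w : e1 ∉ w.1 := by
      rw [hw]
      intro hmem
      rw [Finset.mem_union, Finset.mem_sdiff, Finset.mem_insert, Finset.mem_singleton,
        Finset.mem_singleton] at hmem
      rcases hmem with ⟨_, hne⟩ | hne
      · exact hne (Or.inl rfl)
      · exact hd (hne ▸ h1)
    have he2w : e2 ∉ w.1 := by
      rw [hw]
      intro hmem
      rw [Finset.mem_union, Finset.mem_sdiff, Finset.mem_insert, Finset.mem_singleton,
        Finset.mem_singleton] at hmem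
      rcases hmem with ⟨_, hne⟩ | hne
      · exact hne (Or.inr rfl)
      · exact hd (hne ▸ h2)
    have hdw : d ∈ w.1 := by
      rw [hw]
      exact Finset.mem_union_right _ (Finset.mem_singleton_self _)
    have hdx : d ∉ x.1 := by
      rw [hx, Finset.mem_sdiff]
      rintro ⟨hdH, _⟩
      exact hd hdH
    rcases hz with rfl | rfl | rfl
    · exact Finset.mem_union_left _ (Finset.mem_sdiff.2 ⟨he1x, he1w⟩)
    · exact Finset.mem_union_left _ (Finset.mem_sdiff.2 ⟨he2x, he2w⟩)
    · exact Finset.mem_union_right _ (Finset.mem_sdiff.2 ⟨hdw, hdx⟩)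
  have hcard3 : ({e1, e2, d} : Finset (Sym2 (Fin n))).card = 3 := by
    rw [Finset.card_insert_of_notMem, Finset.card_insert_of_notMem, Finset.card_singleton]
    · rw [Finset.mem_singleton]
      exact fun h => hd (h ▸ h2)
    · simp only [Finset.mem_insert, Finset.mem_singleton]
      rintro (h | h)
      · exact h12 h
      · exact hd (h ▸ h1)
  have := Finset.card_le_card hsub
  omega

end core

/-- For two distinct boundary paths `u, v` with missing hull edges `eu, ev`:
`eu` and `ev` share an endpoint iff the edge `(u,v)` of `G(P)` is not contained
in any maximal clique of size 4. -/
theorem missing_edges_share_vertex_iff (n : ℕ) (hn : 5 ≤ n) (u v : PVert n)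
    (hu : IsBoundary u) (hv : IsBoundary v) (huv : u ≠ v)
    (eu ev : Sym2 (Fin n))
    (heu : IsHullEdge eu ∧ eu ∉ u.1) (hev : IsHullEdge ev ∧ ev ∉ v.1) :
    (∃ x : Fin n, x ∈ eu ∧ x ∈ ev) ↔
      ¬ ∃ s : Set (PVert n), IsMaxClique (pathGraph n) s ∧ s.ncard = 4 ∧
        u ∈ s ∧ v ∈ s := by
  haveI : NeZero n := ⟨by omega⟩
  obtain ⟨heuh, heu1⟩ := heu
  obtain ⟨hevh, hev1⟩ := hev
  have hU : u.1 = hullF n \ {eu} := boundary_eq (by omega) hu heuh heu1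
  have hV : v.1 = hullF n \ {ev} := boundary_eq (by omega) hv hevh hev1
  have hne : eu ≠ ev := by
    intro h
    apply huv
    apply Subtype.ext
    rw [hU, hV, h]
  obtain ⟨a, hea⟩ := (hull_iff (by omega : 2 ≤ n)).1 heuh
  obtain ⟨b, heb⟩ := (hull_iff (by omega : 2 ≤ n)).1 hevh
  have habne : a ≠ b := fun h => hne (by rw [hea, heb, h])
  constructor
  · rintro ⟨x, hxu, hxv⟩ ⟨s, ⟨hclique, hmax⟩, hcard, hus, hvs⟩
    have hshare : b = a + 1 ∨ a = b + 1 := by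
      rw [hea, Sym2.mem_iff] at hxu
      rw [heb, Sym2.mem_iff] at hxv
      rcases hxu with rfl | rfl
      · rcases hxv with h | h
        · exact absurd h habne
        · exact Or.inr h
      · rcases hxv with h | h
        · exact Or.inl h.symm
        · exact absurd (by linear_combination h : a = b) habne
    have hbdall : ∀ t, t ∈ s → ∃ f, IsHullEdge f ∧ t.1 = hullF n \ {f} := by
      intro t hts
      by_cases htu : t = u
      · exact ⟨eu, heuh, by rw [htu, hU]⟩
      by_cases htv : t = v
      · exact ⟨ev, hevh, by rw [htv, hV]⟩
      have hadj1 : (pathGraph n).Adj u t := hclique hus hts (fun h => htu h.symm)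
      have hadj2 : (pathGraph n).Adj v t := hclique hvs hts (fun h => htv h.symm)
      rcases neighbor_form hn heuh hevh hne hU hV hadj1 hadj2 with hb | ⟨d, hdH, htd⟩
      · exact hb
      · exfalso
        rcases hshare with rfl | h
        · apply no_shared_diag hn a hdH (t := t)
          rw [htd, hea, heb]
        · apply no_shared_diag hn b hdH (t := t)
          rw [htd, hea, heb, h, Finset.pair_comm]
    have hsfin : s.Finite := Set.toFinite s
    have hFcard : hsfin.toFinset.card = 4 := by
      rw [← Set.ncard_eq_toFinset_card s hsfin, hcard]
    have hMcard : (hsfin.toFinset.biUnion (fun t => hullF n \ t.1)).card ≤ 4 := by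
      refine le_trans Finset.card_biUnion_le
        (le_trans (Finset.sum_le_sum (g := fun _ => 1) ?_) ?_)
      · intro t ht
        obtain ⟨f, hf, htf⟩ := hbdall t (hsfin.mem_toFinset.1 ht)
        rw [htf,
          Finset.sdiff_sdiff_eq_self (Finset.singleton_subset_iff.2 (mem_hullF.2 hf)),
          Finset.card_singleton]
      · rw [Finset.sum_const, hFcard, smul_eq_mul]
    have hex : ∃ f ∈ hullF n, f ∉ hsfin.toFinset.biUnion (fun t => hullF n \ t.1) := by
      by_contra hcon
      push_neg at hcon
      have hsub : hullF n ⊆ hsfin.toFinset.biUnion (fun t => hullF n \ t.1) := hcon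
      have hle := Finset.card_le_card hsub
      rw [card_hullF (by omega)] at hle
      omega
    obtain ⟨f, hfH, hfM⟩ := hex
    obtain ⟨c, hc⟩ := (hull_iff (by omega : 2 ≤ n)).1 (mem_hullF.1 hfH)
    set t5 : PVert n := ⟨hullF n \ {s(c, c + 1)}, bpath_ncpath (by omega) c⟩ with ht5
    have ht5v : t5.1 = hullF n \ {f} := by
      show hullF n \ {s(c, c + 1)} = hullF n \ {f}
      rw [hc]
    have ht5s : t5 ∉ s := by
      intro hmem
      apply hfM
      apply Finset.mem_biUnion.2
      refine ⟨t5, hsfin.mem_toFinset.2 hmem, ?_⟩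
      rw [ht5v, Finset.sdiff_sdiff_eq_self (Finset.singleton_subset_iff.2 hfH)]
      exact Finset.mem_singleton_self f
    have hclique5 : (pathGraph n).IsClique (s ∪ {t5}) := by
      intro x hx y hy hxy
      simp only [Set.mem_union, Set.mem_singleton_iff] at hx hy
      rcases hx with hx | rfl
      · rcases hy with hy | rfl
        · exact hclique hx hy hxy
        · obtain ⟨fx, hfx, hxf⟩ := hbdall x hx
          refine boundary_adj hfx (mem_hullF.1 hfH) ?_ hxf ht5v
          intro hcon
          apply ht5s
          have hxe : x = t5 := Subtype.ext (by rw [hxf, ht5v, hcon])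
          rw [← hxe]
          exact hx
      · rcases hy with hy | rfl
        · obtain ⟨fy, hfy, hyf⟩ := hbdall y hy
          refine boundary_adj (mem_hullF.1 hfH) hfy ?_ ht5v hyf
          intro hcon
          apply ht5s
          have hye : y = t5 := Subtype.ext (by rw [hyf, ht5v, hcon])
          rw [← hye]
          exact hy
        · exact absurd rfl hxy
    have h5 := hmax (s ∪ {t5}) hclique5 Set.subset_union_left
    exact ht5s (h5 (Set.mem_union_right s rfl))
  · intro hno
    by_contra hnoshare
    have hnos : ∀ x : Fin n, x ∈ eu → x ∈ ev → False :=
      fun x h1 h2 => hnoshare ⟨x, h1, h2⟩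
    have hab1 : a + 1 ≠ b := by
      intro h
      exact hnos (a + 1) (by rw [hea, Sym2.mem_iff]; right; rfl)
        (by rw [heb, Sym2.mem_iff]; left; exact h)
    have hba1 : b + 1 ≠ a := by
      intro h
      exact hnos a (by rw [hea, Sym2.mem_iff]; left; rfl)
        (by rw [heb, Sym2.mem_iff]; right; exact h.symm)
    have hd1H : s(a + 1, b + 1) ∉ hullF n := by
      intro hmem
      obtain ⟨x, hx⟩ := (hull_iff (by omega : 2 ≤ n)).1 (mem_hullF.1 hmem)
      rw [Sym2.eq_iff] at hx
      rcases hx with ⟨h1, h2⟩ | ⟨h1, h2⟩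
      · exact hab1 (by linear_combination h1 - h2)
      · exact hba1 (by linear_combination h2 - h1)
    have hd2H : s(a, b) ∉ hullF n := by
      intro hmem
      obtain ⟨x, hx⟩ := (hull_iff (by omega : 2 ≤ n)).1 (mem_hullF.1 hmem)
      rw [Sym2.eq_iff] at hx
      rcases hx with ⟨h1, h2⟩ | ⟨h1, h2⟩
      · exact hab1 (by linear_combination h1 - h2)
      · exact hba1 (by linear_combination h2 - h1)
    have hd12 : s(a + 1, b + 1) ≠ s(a, b) := by
      intro hcon
      rw [Sym2.eq_iff] at hcon
      rcases hcon with ⟨h1, h2⟩ | ⟨h1, h2⟩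
      · exact ne_add_one (by omega) a h1.symm
      · exact hab1 h1
    have hE1nc : IsNCPath ((hullF n \ {s(a, a + 1), s(b, b + 1)}) ∪ {s(a + 1, b + 1)}) := by
      refine isNCPath_of_hull_or (by omega) (s(a + 1, b + 1))
        ⟨pwEquiv1 (by omega) a b, (pw1_edges hn a b habne hab1 hba1).symm⟩ ?_
      intro e he
      rw [Finset.mem_union, Finset.mem_singleton] at he
      rcases he with he | rfl
      · exact Or.inl (mem_hullF.1 (Finset.mem_sdiff.1 he).1)
      · exact Or.inr rfl
    have hE2nc : IsNCPath ((hullF n \ {s(a, a + 1), s(b, b + 1)}) ∪ {s(a, b)}) := by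
      refine isNCPath_of_hull_or (by omega) (s(a, b))
        ⟨pwEquiv2 (by omega) a b, (pw2_edges hn a b habne hab1 hba1).symm⟩ ?_
      intro e he
      rw [Finset.mem_union, Finset.mem_singleton] at he
      rcases he with he | rfl
      · exact Or.inl (mem_hullF.1 (Finset.mem_sdiff.1 he).1)
      · exact Or.inr rfl
    set w1 : PVert n := ⟨(hullF n \ {s(a, a + 1), s(b, b + 1)}) ∪ {s(a + 1, b + 1)}, hE1nc⟩
      with hw1
    set w2 : PVert n := ⟨(hullF n \ {s(a, a + 1), s(b, b + 1)}) ∪ {s(a, b)}, hE2nc⟩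
      with hw2
    have hw1v : w1.1 = (hullF n \ {eu, ev}) ∪ {s(a + 1, b + 1)} := by
      show (hullF n \ {s(a, a + 1), s(b, b + 1)}) ∪ {s(a + 1, b + 1)} = _
      rw [hea, heb]
    have hw2v : w2.1 = (hullF n \ {eu, ev}) ∪ {s(a, b)} := by
      show (hullF n \ {s(a, a + 1), s(b, b + 1)}) ∪ {s(a, b)} = _
      rw [hea, heb]
    have hd1w1 : s(a + 1, b + 1) ∈ w1.1 :=
      hw1v ▸ Finset.mem_union_right _ (Finset.mem_singleton_self _)
    have hd2w2 : s(a, b) ∈ w2.1 :=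
      hw2v ▸ Finset.mem_union_right _ (Finset.mem_singleton_self _)
    -- distinctness
    have hUsub : u.1 ⊆ hullF n := by rw [hU]; exact Finset.sdiff_subset
    have hVsub : v.1 ⊆ hullF n := by rw [hV]; exact Finset.sdiff_subset
    have huw1 : u ≠ w1 := fun h => hd1H (hUsub (h ▸ hd1w1))
    have huw2 : u ≠ w2 := fun h => hd2H (hUsub (h ▸ hd2w2))
    have hvw1 : v ≠ w1 := fun h => hd1H (hVsub (h ▸ hd1w1))
    have hvw2 : v ≠ w2 := fun h => hd2H (hVsub (h ▸ hd2w2))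
    have hw12 : w1 ≠ w2 := by
      intro h
      have hmem : s(a + 1, b + 1) ∈ w2.1 := h ▸ hd1w1
      rw [hw2v, Finset.mem_union, Finset.mem_singleton] at hmem
      rcases hmem with hmem | hmem
      · exact hd1H (Finset.mem_sdiff.1 hmem).1
      · exact hd12 hmem
    -- adjacencies
    have hadj_uv : (pathGraph n).Adj u v := boundary_adj heuh hevh hne hU hV
    have hadj_uw1 : (pathGraph n).Adj u w1 :=
      adj_of_sdiff huw1 (by rw [hU, hw1v]; exact sdiff_A (mem_hullF.2 hevh) hne.symm hd1H)
        (by rw [hU, hw1v]; exact sdiff_B hd1H)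
    have hadj_uw2 : (pathGraph n).Adj u w2 :=
      adj_of_sdiff huw2 (by rw [hU, hw2v]; exact sdiff_A (mem_hullF.2 hevh) hne.symm hd2H)
        (by rw [hU, hw2v]; exact sdiff_B hd2H)
    have hadj_vw1 : (pathGraph n).Adj v w1 :=
      adj_of_sdiff hvw1
        (by rw [hV, hw1v, Finset.pair_comm]; exact sdiff_A (mem_hullF.2 heuh) hne hd1H)
        (by rw [hV, hw1v, Finset.pair_comm]; exact sdiff_B hd1H)
    have hadj_vw2 : (pathGraph n).Adj v w2 :=
      adj_of_sdiff hvw2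
        (by rw [hV, hw2v, Finset.pair_comm]; exact sdiff_A (mem_hullF.2 heuh) hne hd2H)
        (by rw [hV, hw2v, Finset.pair_comm]; exact sdiff_B hd2H)
    have hadj_w12 : (pathGraph n).Adj w1 w2 :=
      adj_of_sdiff hw12 (by rw [hw1v, hw2v]; exact sdiff_C hd1H hd12)
        (by rw [hw1v, hw2v]; exact sdiff_C hd2H (fun h => hd12 h.symm))
    have hcliqueS : (pathGraph n).IsClique ({u, v, w1, w2} : Set (PVert n)) := by
      intro x hx y hy hxy
      simp only [Set.mem_insert_iff, Set.mem_singleton_iff] at hx hy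
      rcases hx with rfl | rfl | rfl | rfl <;> rcases hy with rfl | rfl | rfl | rfl <;>
        first
          | exact absurd rfl hxy
          | exact hadj_uv | exact hadj_uv.symm
          | exact hadj_uw1 | exact hadj_uw1.symm
          | exact hadj_uw2 | exact hadj_uw2.symm
          | exact hadj_vw1 | exact hadj_vw1.symm
          | exact hadj_vw2 | exact hadj_vw2.symm
          | exact hadj_w12 | exact hadj_w12.symm
    have hncard : ({u, v, w1, w2} : Set (PVert n)).ncard = 4 := by
      rw [Set.ncard_insert_of_notMem (by
          simp only [Set.mem_insert_iff, Set.mem_singleton_iff]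
          push_neg
          exact ⟨huv, huw1, huw2⟩) (Set.toFinite _),
        Set.ncard_insert_of_notMem (by
          simp only [Set.mem_insert_iff, Set.mem_singleton_iff]
          push_neg
          exact ⟨hvw1, hvw2⟩) (Set.toFinite _),
        Set.ncard_insert_of_notMem (by
          simp only [Set.mem_singleton_iff]
          exact hw12) (Set.toFinite _),
        Set.ncard_singleton]
    refine hno ⟨{u, v, w1, w2}, ⟨hcliqueS, ?_⟩, hncard, by simp, by simp⟩
    intro T hT hsub x hxT
    by_cases hxs : x ∈ ({u, v, w1, w2} : Set (PVert n))
    · exact hxs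
    exfalso
    have hxu : x ≠ u := fun h => hxs (by rw [h]; simp)
    have hxv : x ≠ v := fun h => hxs (by rw [h]; simp)
    have hxw1 : x ≠ w1 := fun h => hxs (by rw [h]; simp)
    have hxw2 : x ≠ w2 := fun h => hxs (by rw [h]; simp)
    have hadj1 : (pathGraph n).Adj u x := hT (hsub (by simp)) hxT (fun h => hxu h.symm)
    have hadj2 : (pathGraph n).Adj v x := hT (hsub (by simp)) hxT (fun h => hxv h.symm)
    have hadjw1 : (pathGraph n).Adj x w1 := hT hxT (hsub (by simp)) hxw1
    rcases neighbor_form hn heuh hevh hne hU hV hadj1 hadj2 with ⟨f, hf, hxf⟩ | ⟨d, hdH, hxd⟩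
    · by_cases hfu : f = eu
      · exact hxu (Subtype.ext (by rw [hxf, hfu, ← hU]))
      by_cases hfv : f = ev
      · exact hxv (Subtype.ext (by rw [hxf, hfv, ← hV]))
      exact boundary_not_adj (mem_hullF.2 heuh) (mem_hullF.2 hevh) hne hfu hfv hd1H
        hxf hw1v hadjw1
    · rw [hea, heb] at hxd
      rcases diag_cases hn a b habne hab1 hba1 hdH hxd with rfl | rfl
      · exact hxw1 (Subtype.ext (by rw [hxd, ← hea, ← heb, ← hw1v]))
      · exact hxw2 (Subtype.ext (by rw [hxd, ← hea, ← heb, ← hw2v]))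


end PG
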